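/- The set A of nonnegative integers obtained by the greedy algorithm avoiding three-term arithmetic progressions (recursively include n if and only if there are no x < y < n already in A with x + n = 2y) is exactly the set of nonnegative integers whose base-3 expansion uses only the digits 0 and 1. -/

import Mathlib

/-- The greedy set avoiding three-term arithmetic progressions:
`n` is included iff there are no `x < y < n` already in the set with `x + n = 2 * y`. -/
def greedyA : ℕ → Prop
  | n => ¬ ∃ x, ∃ y, ∃ _ : x < y, ∃ _ : y < n, greedyA x ∧ greedyA y ∧ x + n = 2 * y
termination_by n => n
decreasing_by all_goals omega

def P01 (n : ℕ) : Prop := ∀ c ∈ Nat.digits 3 n, c ≤ 1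

lemma P01_iff (m : ℕ) : P01 m ↔ m % 3 ≤ 1 ∧ P01 (m / 3) := by
  rcases Nat.eq_zero_or_pos m with h | h
  · subst h; simp [P01]
  · rw [P01, Nat.digits_def' (by norm_num : 1 < 3) h]
    simp only [List.mem_cons, P01]
    constructor
    · intro hh
      exact ⟨hh _ (Or.inl rfl), fun c hc => hh c (Or.inr hc)⟩
    · rintro ⟨h1, h2⟩ c (rfl | hc)
      · exact h1
      · exact h2 c hc

lemma no3AP : ∀ y x n : ℕ, P01 x → P01 y → P01 n → x + n = 2 * y → x = n := by
  intro y
  induction y using Nat.strong_induction_on with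
  | _ y ih =>
    intro x n hx hy hn he
    rcases Nat.eq_zero_or_pos y with h0 | h0
    · omega
    · obtain ⟨hx1, hx2⟩ := (P01_iff x).mp hx
      obtain ⟨hy1, hy2⟩ := (P01_iff y).mp hy
      obtain ⟨hn1, hn2⟩ := (P01_iff n).mp hn
      have hdiv : x / 3 + n / 3 = 2 * (y / 3) := by omega
      have := ih (y / 3) (Nat.div_lt_self h0 (by norm_num)) (x / 3) (n / 3) hx2 hy2 hn2 hdiv
      omega

lemma ofDigits_map_lt (f g : ℕ → ℕ) :
    ∀ l : List ℕ, (∀ d ∈ l, f d ≤ g d) →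
      Nat.ofDigits 3 (l.map f) ≤ Nat.ofDigits 3 (l.map g) ∧
      ((∃ d ∈ l, f d < g d) → Nat.ofDigits 3 (l.map f) < Nat.ofDigits 3 (l.map g))
  | [] => by simp
  | a :: t => by
    intro h
    obtain ⟨ihle, ihlt⟩ := ofDigits_map_lt f g t (fun d hd => h d (List.mem_cons_of_mem _ hd))
    have ha : f a ≤ g a := h a (List.mem_cons_self)
    simp only [List.map_cons, Nat.ofDigits_cons, Nat.cast_id]
    constructor
    · omega
    · rintro ⟨d, hd, hfd⟩
      rcases List.mem_cons.mp hd with rfl | hd'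
      · omega
      · have := ihlt ⟨d, hd', hfd⟩; omega

lemma ofDigits_map_add (f g : ℕ → ℕ) :
    ∀ l : List ℕ, (∀ d ∈ l, f d + d = 2 * g d) →
      Nat.ofDigits 3 (l.map f) + Nat.ofDigits 3 l = 2 * Nat.ofDigits 3 (l.map g)
  | [] => by simp
  | a :: t => by
    intro h
    have ih := ofDigits_map_add f g t (fun d hd => h d (List.mem_cons_of_mem _ hd))
    have ha := h a (List.mem_cons_self)
    simp only [List.map_cons, Nat.ofDigits_cons, Nat.cast_id]
    omega

lemma P01_ofDigits : ∀ l : List ℕ, (∀ d ∈ l, d ≤ 1) → P01 (Nat.ofDigits 3 l)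
  | [] => by simp [P01]
  | a :: t => by
    intro h
    have ih := P01_ofDigits t (fun d hd => h d (List.mem_cons_of_mem _ hd))
    have ha : a ≤ 1 := h a (List.mem_cons_self)
    simp only [Nat.ofDigits_cons, Nat.cast_id]
    rw [P01_iff]
    have h1 : (a + 3 * Nat.ofDigits 3 t) % 3 = a := by omega
    have h2 : (a + 3 * Nat.ofDigits 3 t) / 3 = Nat.ofDigits 3 t := by omega
    rw [h1, h2]
    exact ⟨ha, ih⟩

lemma exists_of_notP01 {n : ℕ} (hn : ¬ P01 n) :
    ∃ x y : ℕ, x < y ∧ y < n ∧ P01 x ∧ P01 y ∧ x + n = 2 * y := by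
  set ds := Nat.digits 3 n with hds
  have hlt3 : ∀ d ∈ ds, d < 3 := fun d hd => Nat.digits_lt_base (by norm_num) hd
  obtain ⟨d2, hd2, hd2ge⟩ : ∃ d ∈ ds, 2 ≤ d := by
    by_contra hcon
    push_neg at hcon
    exact hn (fun c hc => by have := hcon c hc; omega)
  have hd2eq : d2 = 2 := by have := hlt3 d2 hd2; omega
  set f : ℕ → ℕ := fun d => if d = 2 then 0 else d with hf
  set g : ℕ → ℕ := fun d => min d 1 with hg
  refine ⟨Nat.ofDigits 3 (ds.map f), Nat.ofDigits 3 (ds.map g), ?_, ?_, ?_, ?_, ?_⟩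
  · exact (ofDigits_map_lt f g ds (fun d hd => by
      have := hlt3 d hd; simp only [hf, hg]; split <;> omega)).2
      ⟨d2, hd2, by simp [hf, hg, hd2eq]⟩
  · have : Nat.ofDigits 3 (ds.map g) < Nat.ofDigits 3 (ds.map id) :=
      (ofDigits_map_lt g id ds (fun d hd => by simp [hg])).2
        ⟨d2, hd2, by simp [hg, hd2eq]⟩
    rwa [List.map_id, hds, Nat.ofDigits_digits] at this
  · exact P01_ofDigits _ (fun d hd => by
      obtain ⟨e, he, rfl⟩ := List.mem_map.mp hd
      have := hlt3 e he; simp only [hf]; split <;> omega)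
  · exact P01_ofDigits _ (fun d hd => by
      obtain ⟨e, he, rfl⟩ := List.mem_map.mp hd
      simp [hg])
  · have := ofDigits_map_add f g ds (fun d hd => by
      have := hlt3 d hd; simp only [hf, hg]; split <;> omega)
    rw [hds, Nat.ofDigits_digits] at this
    exact this

/-- The greedy 3-AP-avoiding set is exactly the set of nonnegative integers whose
base-3 expansion uses only the digits 0 and 1. -/
theorem greedyA_eq_digits01 (n : ℕ) :
    greedyA n ↔ ∀ c ∈ Nat.digits 3 n, c ≤ 1 := by
  induction n using Nat.strong_induction_on with
  | _ n ih =>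
    show greedyA n ↔ P01 n
    rw [greedyA]
    constructor
    · intro h
      by_contra hP
      obtain ⟨x, y, hxy, hyn, hPx, hPy, he⟩ := exists_of_notP01 hP
      exact h ⟨x, y, hxy, hyn,
        (ih x (lt_trans hxy hyn)).mpr hPx, (ih y hyn).mpr hPy, he⟩
    · rintro hP ⟨x, y, hxy, hyn, hx, hy, he⟩
      have := no3AP y x n ((ih x (lt_trans hxy hyn)).mp hx) ((ih y hyn).mp hy) hP he
      omega
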